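/- Let p(λ) = d_k λ^k + ... + d_1 λ + d_0 be a real polynomial all of whose complex roots are real. Then the number of positive roots of p, counted with multiplicity, equals the number of sign changes in the sequence of coefficients d_k, d_{k−1}, ..., d_1, d_0 after removing zero entries. -/

import Mathlib

open Polynomial

/-- Number of sign changes in a list of real numbers (assumed to have no zero entries
when applied, counting consecutive pairs of opposite sign). -/
noncomputable def signChanges : List ℝ → ℕ
  | [] => 0
  | [_] => 0
  | a :: b :: l => (if a * b < 0 then 1 else 0) + signChanges (b :: l)

/-- The ordered list of coefficients `d_k, d_{k-1}, …, d_1, d_0` of a polynomial. -/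
noncomputable def coeffList (p : Polynomial ℝ) : List ℝ :=
  (List.range (p.natDegree + 1)).map (fun i => p.coeff (p.natDegree - i))



lemma sgn_pp {x y z : ℝ} (h1 : 0 < x * z) (h2 : 0 < y * z) : 0 < x * y := by
  rcases lt_trichotomy z 0 with h | h | h
  · have hx : x < 0 := by nlinarith
    have hy : y < 0 := by nlinarith
    nlinarith
  · subst h; simp at h1
  · have hx : 0 < x := by nlinarith
    have hy : 0 < y := by nlinarith
    positivity
lemma sgn_pn {x y z : ℝ} (h1 : 0 < x * z) (h2 : z * y < 0) : x * y < 0 := by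
  rcases lt_trichotomy z 0 with h | h | h
  · have hx : x < 0 := by nlinarith
    have hy : 0 < y := by nlinarith
    nlinarith
  · subst h; simp at h1
  · have hx : 0 < x := by nlinarith
    have hy : y < 0 := by nlinarith
    nlinarith

lemma sc_cons_le (a : ℝ) (l : List ℝ) : signChanges l ≤ signChanges (a :: l) := by
  cases l with
  | nil => simp [signChanges]
  | cons b t => rw [signChanges]; exact Nat.le_add_left _ _

lemma sc_cons_cons_le (a b : ℝ) (l : List ℝ) (ha : a ≠ 0) (hb : b ≠ 0)
    (hl : ∀ x ∈ l, x ≠ 0) :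
    signChanges (a :: l) ≤ signChanges (a :: b :: l) := by
  cases l with
  | nil => simp [signChanges]
  | cons d t =>
    rw [signChanges, signChanges, signChanges]
    have hd : d ≠ 0 := hl d (by simp)
    by_cases had : a * d < 0
    · by_cases hab : a * b < 0
      · simp only [had, hab, if_true]; omega
      · have hab' : 0 < a * b :=
          lt_of_le_of_ne (not_lt.mp hab) (Ne.symm (mul_ne_zero ha hb))
        have hbd : b * d < 0 := sgn_pn (mul_comm a b ▸ hab') had
        simp [had, hab, hbd]
    · simp only [had, if_false]; omega

lemma sc_sublist_aux {l' l : List ℝ} (h : List.Sublist l' l) :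
    ∀ a : ℝ, a ≠ 0 → (∀ x ∈ l, x ≠ 0) →
    signChanges (a :: l') ≤ signChanges (a :: l) := by
  induction h with
  | slnil => intro a _ _; exact le_rfl
  | @cons l' l b h ih =>
    intro a ha hnz
    have h1 := ih a ha (fun x hx => hnz x (by simp [hx]))
    have h2 := sc_cons_cons_le a b l ha (hnz b (by simp))
      (fun x hx => hnz x (by simp [hx]))
    omega
  | @cons_cons l' l b h ih =>
    intro a ha hnz
    rw [signChanges, signChanges]
    have := ih b (hnz b (by simp)) (fun x hx => hnz x (by simp [hx]))
    omega

lemma sc_sublist {l' l : List ℝ} (h : List.Sublist l' l) (hnz : ∀ x ∈ l, x ≠ 0) :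
    signChanges l' ≤ signChanges l := by
  cases h with
  | slnil => exact le_rfl
  | @cons _ t b h =>
    exact le_trans (sc_sublist (l := t) h (fun x hx => hnz x (by simp [hx]))) (sc_cons_le b t)
  | @cons_cons _ t b h =>
    exact sc_sublist_aux h b (hnz b (by simp)) (fun x hx => hnz x (by simp [hx]))
termination_by l.length

-- alternating list facts
lemma sc_alt : ∀ (a : ℝ) (l : List ℝ),
    List.Chain' (fun x y => x * y < 0) (a :: l) →
    signChanges (a :: l) + 1 = (a :: l).length
  | _, [], _ => rfl
  | a, b :: t, h => by
    rw [signChanges]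
    have hab : a * b < 0 := (List.isChain_cons_cons.mp h).1
    have := sc_alt b t (List.isChain_cons_cons.mp h).2
    simp only [hab, if_true, List.length_cons] at *
    omega

lemma alt_nonzero : ∀ (a b : ℝ) (t : List ℝ),
    List.Chain' (fun x y => x * y < 0) (a :: b :: t) →
    ∀ x ∈ a :: b :: t, x ≠ 0
  | a, b, [], h => by
    have hab : a * b < 0 := (List.isChain_cons_cons.mp h).1
    intro x hx
    rcases List.mem_cons.mp hx with rfl | hx
    · intro h0; rw [h0] at hab; simp at hab
    · simp at hx; subst hx; intro h0; rw [h0] at hab; simp at hab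
  | a, b, d :: t, h => by
    have hab : a * b < 0 := (List.isChain_cons_cons.mp h).1
    intro x hx
    rcases List.mem_cons.mp hx with rfl | hx
    · intro h0; rw [h0] at hab; simp at hab
    · exact alt_nonzero b d t (List.isChain_cons_cons.mp h).2 x hx
lemma sc_concat (a : ℝ) : ∀ (l : List ℝ) (h : l ≠ []),
    signChanges (l ++ [a]) = signChanges l +
      (if l.getLast h * a < 0 then 1 else 0)
  | [x], _ => by by_cases h : x * a < 0 <;> simp [signChanges, h]
  | x :: y :: t, _ => by
    have h1 := sc_concat a (y :: t) (by simp)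
    have e1 : (x :: y :: t) ++ [a] = x :: y :: (t ++ [a]) := by simp
    rw [e1]
    rw [show signChanges (x :: y :: (t ++ [a])) = (if x * y < 0 then 1 else 0) + signChanges (y :: (t ++ [a])) from rfl]
    rw [show (y : ℝ) :: (t ++ [a]) = (y :: t) ++ [a] from (List.cons_append (a := y) (as := t) (bs := [a])).symm, h1,
      List.getLast_cons (by simp : y :: t ≠ [])]
    rw [show signChanges (x :: y :: t) = (if x * y < 0 then 1 else 0) + signChanges (y :: t) from rfl]
    omega

lemma sc_reverse : ∀ l : List ℝ, signChanges l.reverse = signChanges l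
  | [] => rfl
  | [x] => by simp
  | x :: y :: t => by
    rw [List.reverse_cons, sc_concat _ _ (by simp), sc_reverse (y :: t)]
    have : (y :: t).reverse.getLast (by simp) = y := by
      rw [List.getLast_reverse]; rfl
    rw [this, signChanges, mul_comm y x]
    omega

-- max of sorted list
lemma le_getLast_of_sorted : ∀ (l : List ℕ) (h : l ≠ []), List.Chain' (· < ·) l →
    ∀ x ∈ l, x ≤ l.getLast h
  | [a], _, _, x, hx => by simp at hx; subst hx; rfl
  | a :: b :: t, _, hs, x, hx => by
    rw [List.getLast_cons (by simp : b :: t ≠ [])]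
    rcases List.mem_cons.mp hx with rfl | hx
    · have hab : x < b := (List.isChain_cons_cons.mp hs).1
      have := le_getLast_of_sorted (b :: t) (by simp) (List.isChain_cons_cons.mp hs).2 b (by simp)
      omega
    · exact le_getLast_of_sorted (b :: t) (by simp) (List.isChain_cons_cons.mp hs).2 x hx

lemma sublist_range_of_sorted : ∀ (n : ℕ) (G : List ℕ), List.Pairwise (· < ·) G →
    (∀ i ∈ G, i < n) → List.Sublist G (List.range n) := by
  intro n
  induction n with
  | zero =>
    intro G _ hb
    cases G with
    | nil => simp
    | cons a t => exact absurd (hb a (by simp)) (by omega)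
  | succ n ih =>
    intro G hp hb
    rw [List.range_succ]
    by_cases hn : n ∈ G
    · obtain ⟨u, v, rfl⟩ := List.append_of_mem hn
      have hv : v = [] := by
        rcases v with _ | ⟨c, v⟩
        · rfl
        · exfalso
          have h1 : n < c := by
            have := (List.pairwise_append.mp hp).2.1
            exact (List.pairwise_cons.mp this).1 c (by simp)
          have := hb c (by simp)
          omega
      subst hv
      have hu : List.Sublist u (List.range n) := by
        apply ih
        · exact (List.pairwise_append.mp hp).1
        · intro i hi
          exact (List.pairwise_append.mp hp).2.2 i hi n (by simp)
      exact hu.append (List.Sublist.refl [n])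
    · have : List.Sublist G (List.range n) := by
        apply ih _ hp
        intro i hi
        have := hb i hi
        rcases Nat.lt_succ_iff_lt_or_eq.mp this with h | rfl
        · exact h
        · exact absurd hi hn
      exact this.trans (List.sublist_append_left _ _)

lemma key (r : ℝ) (hr : 0 < r) (b c : ℕ → ℝ)
    (hc : ∀ i, c (i + 1) = b i - r * b (i + 1)) :
    ∀ (E : List ℕ) (e f : ℕ), List.Chain' (· < ·) (e :: E) →
    f ≤ e → c f * b e < 0 →
    (∀ x ∈ e :: E, b x ≠ 0) →
    (∀ i, e < i → i ∉ e :: E → b i = 0) →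
    ∃ G : List ℕ, G ≠ [] ∧ List.Chain' (· < ·) (f :: G) ∧
      List.Chain' (fun i j => c i * c j < 0) (f :: G) ∧
      (f :: G).length = signChanges ((e :: E).map b) + 2 ∧
      ∀ i ∈ G, i ≤ (e :: E).getLast (List.cons_ne_nil e E) + 1 := by
  intro E
  induction E with
  | nil =>
    intro e f hch hfe hneg hnz hgap
    have hb1 : b (e + 1) = 0 := hgap (e + 1) (by omega) (by simp)
    have hce : c (e + 1) = b e := by rw [hc e, hb1]; ring
    refine ⟨[e + 1], by simp, ?_, ?_, rfl, ?_⟩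
    · exact List.isChain_pair.mpr (by omega)
    · exact List.isChain_pair.mpr (by rw [hce]; exact hneg)
    · intro i hi; simp at hi; subst hi; simp
  | cons e' E'' ih =>
    intro e f hch hfe hneg hnz hgap
    have hee' : e < e' := (List.isChain_cons_cons.mp hch).1
    have hch' := (List.isChain_cons_cons.mp hch).2
    have hbe : b e ≠ 0 := hnz e (by simp)
    have hbe' : b e' ≠ 0 := hnz e' (by simp)
    have hmin' : ∀ x ∈ e' :: E'', e' ≤ x := by
      intro x hx
      rcases List.mem_cons.mp hx with rfl | hx
      · exact le_rfl
      · exact le_of_lt (List.rel_of_pairwise_cons (List.isChain_iff_pairwise.mp hch') hx)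
    have hnz' : ∀ x ∈ e' :: E'', b x ≠ 0 := fun x hx => hnz x (by simp [List.mem_cons.mp hx])
    have hgap' : ∀ i, e' < i → i ∉ e' :: E'' → b i = 0 := by
      intro i hi hni
      exact hgap i (by omega) (by
        simp only [List.mem_cons, not_or] at hni ⊢
        exact ⟨by omega, hni.1, hni.2⟩)
    have hlast : (e :: e' :: E'').getLast (List.cons_ne_nil _ _)
        = (e' :: E'').getLast (List.cons_ne_nil _ _) :=
      List.getLast_cons (List.cons_ne_nil _ _)
    have he'last : e' ≤ (e' :: E'').getLast (List.cons_ne_nil _ _) :=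
      le_getLast_of_sorted _ _ hch' e' (by simp)
    by_cases hs : b e * b e' < 0
    · -- sign change between e and e'
      have hb1 : 0 < c (e + 1) * b e := by
        rw [hc e]
        by_cases h1 : e + 1 = e'
        · rw [h1]
          have h2 : 0 < b e * b e := mul_self_pos.mpr hbe
          nlinarith [mul_pos hr (neg_pos.mpr hs)]
        · have h0 : b (e + 1) = 0 := by
            apply hgap (e + 1) (by omega)
            simp only [List.mem_cons, not_or]
            refine ⟨by omega, h1, fun hmem => ?_⟩
            have := hmin' (e + 1) (by simp [hmem])
            omega
          rw [h0]
          have h2 : 0 < b e * b e := mul_self_pos.mpr hbe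
          nlinarith
      have hneg' : c (e + 1) * b e' < 0 := sgn_pn hb1 hs
      obtain ⟨G', hG'ne, hG'ch, hG'alt, hG'len, hG'bd⟩ :=
        ih e' (e + 1) hch' (by omega) hneg' hnz' hgap'
      refine ⟨(e + 1) :: G', by simp, ?_, ?_, ?_, ?_⟩
      · exact List.isChain_cons_cons.mpr ⟨by omega, hG'ch⟩
      · refine List.isChain_cons_cons.mpr ⟨?_, hG'alt⟩
        have := sgn_pn hb1 (mul_comm (c f) (b e) ▸ hneg)
        linarith [mul_comm (c (e + 1)) (c f) ▸ this]
      · have hmap : (e :: e' :: E'').map b = b e :: b e' :: E''.map b := rfl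
        rw [hmap, show signChanges (b e :: b e' :: E''.map b)
          = (if b e * b e' < 0 then 1 else 0) + signChanges (b e' :: E''.map b) from rfl,
          if_pos hs]
        have : ((e + 1) :: G').length = signChanges ((e' :: E'').map b) + 2 := hG'len
        simp only [List.length_cons] at this ⊢
        simp only [List.map_cons] at this
        omega
      · intro i hi
        rw [hlast]
        rcases List.mem_cons.mp hi with rfl | hi
        · omega
        · exact hG'bd i hi
    · -- same sign
      have hpos : 0 < b e * b e' :=
        lt_of_le_of_ne (not_lt.mp hs) (Ne.symm (mul_ne_zero hbe hbe'))
      have hneg' : c f * b e' < 0 := by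
        have := sgn_pn (mul_comm (b e) (b e') ▸ hpos) (mul_comm (c f) (b e) ▸ hneg)
        linarith [mul_comm (b e') (c f) ▸ this]
      obtain ⟨G', hG'ne, hG'ch, hG'alt, hG'len, hG'bd⟩ :=
        ih e' f hch' (by omega) hneg' hnz' hgap'
      refine ⟨G', hG'ne, hG'ch, hG'alt, ?_, ?_⟩
      · have hmap : (e :: e' :: E'').map b = b e :: b e' :: E''.map b := rfl
        rw [hmap, show signChanges (b e :: b e' :: E''.map b)
          = (if b e * b e' < 0 then 1 else 0) + signChanges (b e' :: E''.map b) from rfl,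
          if_neg hs]
        have : (f :: G').length = signChanges ((e' :: E'').map b) + 2 := hG'len
        simp only [List.map_cons] at this
        omega
      · intro i hi
        rw [hlast]
        exact hG'bd i hi
lemma lemC (b b' : ℕ → ℝ)
    (hbb' : ∀ i j, b' i * b' j = (-1:ℝ)^(i+j) * (b i * b j)) :
    ∀ (E : List ℕ) (e n : ℕ), List.Chain' (· < ·) (e :: E) →
    (∀ x ∈ e :: E, b x ≠ 0) → (∀ x ∈ e :: E, x ≤ n) →
    signChanges ((e :: E).map b) + signChanges ((e :: E).map b') + e ≤ n := by
  intro E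
  induction E with
  | nil =>
    intro e n _ _ hbd
    have := hbd e (by simp)
    simp [signChanges]; omega
  | cons e' E'' ih =>
    intro e n hch hnz hbd
    have hee' : e < e' := (List.isChain_cons_cons.mp hch).1
    have hIH := ih e' n (List.isChain_cons_cons.mp hch).2
      (fun x hx => hnz x (by simp [List.mem_cons.mp hx]))
      (fun x hx => hbd x (by simp [List.mem_cons.mp hx]))
    have hprod : b e * b e' ≠ 0 :=
      mul_ne_zero (hnz e (by simp)) (hnz e' (by simp))
    have hkey : (if b e * b e' < 0 then 1 else 0) + (if b' e * b' e' < 0 then 1 else 0)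
        ≤ e' - e := by
      by_cases hpar : Even (e + e')
      · have h2 : 2 ≤ e' - e := by
          rcases hpar with ⟨k, hk⟩
          omega
        have i1 : (if b e * b e' < 0 then 1 else 0) ≤ 1 := by split <;> omega
        have i2 : (if b' e * b' e' < 0 then 1 else 0) ≤ 1 := by split <;> omega
        omega
      · have hodd : (-1 : ℝ)^(e + e') = -1 := (Odd.neg_one_pow (Nat.odd_iff.mpr ?_))
        swap
        · rw [Nat.even_iff] at hpar; omega
        have h3 : b' e * b' e' = -(b e * b e') := by rw [hbb', hodd]; ring
        rcases lt_trichotomy (b e * b e') 0 with h | h | h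
        · simp [h, h3, not_lt.mpr (le_of_lt (by linarith : (0:ℝ) < -(b e * b e')))]
          omega
        · exact absurd h hprod
        · have : ¬ b e * b e' < 0 := not_lt.mpr (le_of_lt h)
          simp [this, h3, h]
          omega
    have hsc : signChanges ((e :: e' :: E'').map b)
        = (if b e * b e' < 0 then 1 else 0) + signChanges ((e' :: E'').map b) := rfl
    have hsc' : signChanges ((e :: e' :: E'').map b')
        = (if b' e * b' e' < 0 then 1 else 0) + signChanges ((e' :: E'').map b') := rfl
    rw [hsc, hsc']
    omega

noncomputable def El (p : Polynomial ℝ) : List ℕ :=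
  (List.range (p.natDegree + 1)).filter (fun i => p.coeff i ≠ 0)

noncomputable def W (p : Polynomial ℝ) : ℕ := signChanges ((El p).map p.coeff)

lemma mem_El {p : Polynomial ℝ} {i : ℕ} : i ∈ El p ↔ i ≤ p.natDegree ∧ p.coeff i ≠ 0 := by
  simp [El, Nat.lt_succ_iff]

lemma El_pairwise (p : Polynomial ℝ) : (El p).Pairwise (· < ·) :=
  List.pairwise_lt_range.sublist List.filter_sublist

lemma El_chain' (p : Polynomial ℝ) : (El p).Chain' (· < ·) :=
  List.isChain_iff_pairwise.mpr (El_pairwise p)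

lemma El_ne_nil {p : Polynomial ℝ} (hp : p ≠ 0) : El p ≠ [] := by
  have : p.natDegree ∈ El p := mem_El.mpr ⟨le_rfl, by
    rw [← leadingCoeff]; exact leadingCoeff_ne_zero.mpr hp⟩
  exact List.ne_nil_of_mem this

-- coefficients of (X - C r) * q
lemma coeff_XsubC_mul (r : ℝ) (q : Polynomial ℝ) (i : ℕ) :
    ((X - C r) * q).coeff (i + 1) = q.coeff i - r * q.coeff (i + 1) := by
  rw [sub_mul, coeff_sub, coeff_X_mul, coeff_C_mul]

lemma coeff_XsubC_mul_zero (r : ℝ) (q : Polynomial ℝ) :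
    ((X - C r) * q).coeff 0 = -(r * q.coeff 0) := by
  rw [sub_mul, coeff_sub, coeff_C_mul, mul_coeff_zero, coeff_X_zero]
  ring

-- comp with -X
lemma coeff_comp_neg_X (p : Polynomial ℝ) : ∀ i, (p.comp (-X)).coeff i = (-1)^i * p.coeff i := by
  induction p using Polynomial.induction_on' with
  | add p q hp hq => intro i; simp [add_comp, hp, hq]; ring
  | monomial n a =>
    intro i
    have h1 : ((monomial n a).comp (-X) : Polynomial ℝ) = C a * (-X)^n := by
      simp [Polynomial.comp, eval₂_monomial]
    have h2 : (-X : Polynomial ℝ) = C (-1) * X := by simp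
    rw [h1, h2, mul_pow, ← C_pow, ← mul_assoc, ← C_mul, coeff_C_mul, coeff_X_pow,
      coeff_monomial]
    rcases eq_or_ne n i with h | h
    · subst h; simp; ring
    · simp [h, Ne.symm h]

lemma natDegree_comp_neg_X (p : Polynomial ℝ) : (p.comp (-X)).natDegree = p.natDegree := by
  rw [natDegree_comp, natDegree_neg, natDegree_X, mul_one]

lemma El_comp_neg_X (p : Polynomial ℝ) : El (p.comp (-X)) = El p := by
  unfold El
  rw [natDegree_comp_neg_X]
  apply List.filter_congr
  intro i _
  simp [coeff_comp_neg_X, pow_ne_zero]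

lemma map_range_rev (c : ℕ → ℝ) : ∀ n,
    (List.range (n + 1)).map (fun i => c (n - i)) = ((List.range (n + 1)).map c).reverse := by
  intro n
  induction n with
  | zero => rw [List.range_succ]; simp
  | succ n ih =>
    have hR : (List.map c (List.range (n + 2))).reverse
        = c (n + 1) :: (List.map c (List.range (n + 1))).reverse := by
      rw [List.range_succ, List.map_append, List.reverse_append]
      simp
    rw [hR, ← ih]
    rw [List.range_succ_eq_map, List.map_cons, List.map_map]
    congr 1
    apply List.map_congr_left
    intro i _
    have h2 : n + 1 - (i + 1) = n - i := by omega
    simp [Function.comp, h2]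

lemma RHS_eq_W (p : Polynomial ℝ) :
    signChanges ((_root_.coeffList p).filter (fun d => d ≠ 0)) = W p := by
  unfold _root_.coeffList
  rw [map_range_rev, List.filter_reverse, sc_reverse]
  unfold W El
  rw [List.filter_map]
  rfl

lemma W_X_mul (q : Polynomial ℝ) (hq : q ≠ 0) : W (X * q) = W q := by
  have hdeg : (X * q).natDegree = q.natDegree + 1 := by
    rw [natDegree_mul X_ne_zero hq, natDegree_X]; omega
  have hEl : El (X * q) = (El q).map Nat.succ := by
    unfold El
    rw [hdeg, List.range_succ_eq_map, List.filter_cons]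
    have h0 : (decide ((X * q).coeff 0 ≠ 0)) = false := by
      simp [mul_coeff_zero]
    rw [h0]
    simp only [Bool.false_eq_true, if_false]
    rw [List.filter_map]
    congr 1
    apply List.filter_congr
    intro i _
    simp [Function.comp, coeff_X_mul]
  unfold W
  rw [hEl, List.map_map]
  congr 1
  apply List.map_congr_left
  intro i _
  simp [Function.comp, coeff_X_mul]

lemma W_X_pow_mul (q : Polynomial ℝ) (hq : q ≠ 0) : ∀ m, W (X ^ m * q) = W q := by
  intro m
  induction m with
  | zero => simp
  | succ m ih =>
    have h1 : (X : Polynomial ℝ) ^ (m + 1) * q = X * (X ^ m * q) := by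
      rw [pow_succ']; ring
    rw [h1, W_X_mul _ (mul_ne_zero (pow_ne_zero _ X_ne_zero) hq)]
    exact ih

-- placeholders for already-proven lemmas (in other files)
lemma lemA (r : ℝ) (hr : 0 < r) (q : Polynomial ℝ) (hq : q ≠ 0) :
    W q + 1 ≤ W ((X - C r) * q) := by
  set n := q.natDegree with hn
  set P := (X - C r) * q with hP
  have hPne : P ≠ 0 := mul_ne_zero (X_sub_C_ne_zero r) hq
  have hdeg : P.natDegree = n + 1 := by
    rw [hP, natDegree_mul (X_sub_C_ne_zero r) hq, natDegree_X_sub_C]; omega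
  have hc : ∀ i, P.coeff (i + 1) = q.coeff i - r * q.coeff (i + 1) :=
    fun i => coeff_XsubC_mul r q i
  have hc0 : P.coeff 0 = -(r * q.coeff 0) := coeff_XsubC_mul_zero r q
  obtain ⟨e, E, hE⟩ : ∃ e E, El q = e :: E := by
    rcases h : El q with _ | ⟨e, E⟩
    · exact absurd h (El_ne_nil hq)
    · exact ⟨e, E, rfl⟩
  have hch : List.Chain' (· < ·) (e :: E) := hE ▸ El_chain' q
  have hnz : ∀ x ∈ e :: E, q.coeff x ≠ 0 := by
    intro x hx; exact (mem_El.mp (hE ▸ hx : x ∈ El q)).2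
  have hbd : ∀ x ∈ e :: E, x ≤ n := by
    intro x hx; exact (mem_El.mp (hE ▸ hx : x ∈ El q)).1
  have hgap : ∀ i, e < i → i ∉ e :: E → q.coeff i = 0 := by
    intro i hi hni
    by_cases hile : i ≤ n
    · by_contra hne
      exact hni (hE ▸ mem_El.mpr ⟨hile, hne⟩)
    · exact coeff_eq_zero_of_natDegree_lt (by omega)
  have hbelow : ∀ i, i < e → q.coeff i = 0 := by
    intro i hi
    by_contra hne
    have : i ∈ e :: E := hE ▸ mem_El.mpr ⟨by
      have := hbd e (by simp); omega, hne⟩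
    have hpw := List.isChain_iff_pairwise.mp hch
    rcases List.mem_cons.mp this with rfl | hmem
    · omega
    · exact absurd (List.rel_of_pairwise_cons hpw hmem) (by omega)
  have hbe : q.coeff e ≠ 0 := hnz e (by simp)
  have hneg : P.coeff e * q.coeff e < 0 := by
    cases e with
    | zero =>
      rw [hc0]
      have := mul_self_pos.mpr hbe
      nlinarith
    | succ e1 =>
      rw [hc e1, hbelow e1 (by omega)]
      have := mul_self_pos.mpr hbe
      nlinarith
  obtain ⟨G, hGne, hGch, hGalt, hGlen, hGbd⟩ :=
    key r hr q.coeff P.coeff hc E e e hch le_rfl hneg hnz hgap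
  -- the alternating value list
  have hvalt : List.Chain' (fun x y => x * y < 0) ((e :: G).map P.coeff) :=
    (List.isChain_map P.coeff).mpr hGalt
  have hscval : signChanges ((e :: G).map P.coeff) + 1 = (e :: G).length := by
    have := sc_alt (P.coeff e) (G.map P.coeff) (by
      simpa using hvalt)
    simpa using this
  -- nonzero values
  have hvne : ∀ x ∈ (e :: G).map P.coeff, x ≠ 0 := by
    rcases G with _ | ⟨g, G2⟩
    · exact absurd rfl hGne
    · intro x hx
      exact alt_nonzero (P.coeff e) (P.coeff g) (G2.map P.coeff)
        (by simpa using hvalt) x (by simpa using hx)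
  -- sublist of the coefficient list of P
  have hlastle : (e :: E).getLast (List.cons_ne_nil e E) ≤ n := by
    apply hbd
    exact List.getLast_mem _
  have hsub : List.Sublist (e :: G) (List.range (n + 2)) := by
    apply sublist_range_of_sorted
    · exact List.isChain_iff_pairwise.mp hGch
    · intro i hi
      rcases List.mem_cons.mp hi with h | hi
      · have h2 := hbd e (by simp); omega
      · have := hGbd i hi; omega
  have hsub2 : List.Sublist ((e :: G).map P.coeff)
      ((List.range (n + 2)).map P.coeff) := hsub.map _
  have heq1 : ((e :: G).map P.coeff).filter (fun x => x ≠ 0) = (e :: G).map P.coeff :=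
    List.filter_eq_self.mpr (fun a ha => by simpa using hvne a ha)
  have hsub3 : List.Sublist ((e :: G).map P.coeff)
      (((List.range (n + 2)).map P.coeff).filter (fun x => x ≠ 0)) := by
    rw [← heq1]
    exact hsub2.filter _
  have hWP : W P = signChanges (((List.range (n + 2)).map P.coeff).filter (fun x => x ≠ 0)) := by
    unfold W El
    rw [hdeg, List.filter_map]
    rfl
  have hfin : signChanges ((e :: G).map P.coeff)
      ≤ signChanges (((List.range (n + 2)).map P.coeff).filter (fun x => x ≠ 0)) := by
    apply sc_sublist hsub3
    intro x hx
    simpa using (List.mem_filter.mp hx).2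
  have hWq : W q = signChanges ((e :: E).map q.coeff) := by
    unfold W; rw [hE]
  have hlen : (e :: G).length = signChanges ((e :: E).map q.coeff) + 2 := by
    simpa using hGlen
  rw [hWq, ← hWP] at *
  omega

lemma prod_XsubC_ne_zero (t : Multiset ℝ) : (t.map (fun a => X - C a)).prod ≠ 0 :=
  (monic_multiset_prod_of_monic _ _ (fun p _ => monic_X_sub_C _)).ne_zero

lemma Wprod (q0 : Polynomial ℝ) (hq0 : q0 ≠ 0) :
    ∀ t : Multiset ℝ, (∀ x ∈ t, 0 < x) →
    Multiset.card t ≤ W (q0 * (t.map (fun a => X - C a)).prod) := by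
  intro t
  induction t using Multiset.induction_on with
  | empty => simp
  | cons r t ih =>
    intro ht
    have h1 : q0 * ((r ::ₘ t).map (fun a => X - C a)).prod
        = (X - C r) * (q0 * (t.map (fun a => X - C a)).prod) := by
      rw [Multiset.map_cons, Multiset.prod_cons]; ring
    rw [h1]
    have hne : q0 * (t.map (fun a => X - C a)).prod ≠ 0 :=
      mul_ne_zero hq0 (prod_XsubC_ne_zero t)
    have h2 := lemA r (ht r (by simp)) _ hne
    have h3 := ih (fun x hx => ht x (by simp [hx]))
    rw [Multiset.card_cons]
    omega

theorem deGua (p : Polynomial ℝ) (hp : p ≠ 0)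
    (hsplit : Polynomial.Splits (p.map (RingHom.id ℝ))) :
    Multiset.card (p.roots.filter (fun x => 0 < x))
      = signChanges ((_root_.coeffList p).filter (fun d => d ≠ 0)) := by
  classical
  set s := p.roots with hs
  set a := p.leadingCoeff with ha
  have hane : a ≠ 0 := leadingCoeff_ne_zero.mpr hp
  have hfact : p = C a * (s.map (fun x => X - C x)).prod :=
    by have h : Splits p := by simpa using hsplit
       exact h.eq_prod_roots
  set s0 := s.filter (fun x => x = 0) with hs0
  set sneg := s.filter (fun x => x < 0) with hsneg
  set spos := s.filter (fun x => 0 < x) with hspos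
  -- split s
  have hsplit2 : s.filter (fun x => ¬ x = 0) = sneg + spos := by
    have h2 := Multiset.filter_add_not (fun x => x < 0) (s.filter (fun x => ¬ x = 0))
    rw [Multiset.filter_filter, Multiset.filter_filter] at h2
    rw [← h2]
    congr 1
    · rw [hsneg]; apply Multiset.filter_congr; intro x hx; constructor
      · intro h; exact h.1
      · intro h; exact ⟨h, by intro h0; rw [h0] at h; exact absurd h (by norm_num)⟩
    · rw [hspos]; apply Multiset.filter_congr; intro x hx; constructor
      · intro h; rcases lt_trichotomy x 0 with h1 | h1 | h1
        · exact absurd h1 h.1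
        · exact absurd h1 h.2
        · exact h1
      · intro h; exact ⟨not_lt.mpr (le_of_lt h), by intro h0; rw [h0] at h; exact absurd h (by norm_num)⟩
  have hssum : s = s0 + (sneg + spos) := by
    rw [← hsplit2, hs0]
    exact (Multiset.filter_add_not _ _).symm
  set m := Multiset.card s0 with hm
  set s' := sneg + spos with hs'
  set K := Multiset.card s' with hK
  set q := C a * (s'.map (fun x => X - C x)).prod with hqdef
  have hqne : q ≠ 0 := mul_ne_zero (by simpa using hane) (prod_XsubC_ne_zero s')
  -- p = X^m * q
  have hs0rep : s0 = Multiset.replicate m 0 := by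
    exact Multiset.eq_replicate_card.mpr (fun b hb => (Multiset.mem_filter.mp hb).2)
  have hprod0 : (s0.map (fun x => X - C x)).prod = X ^ m := by
    rw [hs0rep, Multiset.map_replicate, Multiset.prod_replicate]
    simp
  have hpXmq : p = X ^ m * q := by
    rw [hfact, hssum, Multiset.map_add, Multiset.prod_add, hprod0, hqdef]
    ring
  have hWpq : W p = W q := by rw [hpXmq]; exact W_X_pow_mul q hqne m
  -- degree of q
  have hdegq : q.natDegree = K := by
    rw [hqdef, natDegree_C_mul hane, natDegree_multiset_prod_X_sub_C_eq_card]
  -- lower bound: card spos ≤ W q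
  have hlow1 : Multiset.card spos ≤ W q := by
    have h1 : q = (C a * (sneg.map (fun x => X - C x)).prod)
        * (spos.map (fun x => X - C x)).prod := by
      rw [hqdef, hs', Multiset.map_add, Multiset.prod_add]; ring
    rw [h1]
    exact Wprod _ (mul_ne_zero (by simpa using hane) (prod_XsubC_ne_zero sneg)) spos
      (fun x hx => (Multiset.mem_filter.mp hx).2)
  -- q composed with -X
  set qn := q.comp (-X) with hqn
  have hqnfact : qn = C (a * (-1)^K) * ((s'.map (fun x => -x)).map (fun x => X - C x)).prod := by
    rw [hqn, hqdef, mul_comp, C_comp, Polynomial.multiset_prod_comp, Multiset.map_map]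
    have hpt : ∀ v : ℝ, ((fun p : Polynomial ℝ => p.comp (-X)) ∘ (fun x : ℝ => X - C x)) v
        = C (-1) * (X - C (-v)) := by
      intro v
      simp [Function.comp, sub_comp, X_comp, C_comp]
      ring
    rw [Multiset.map_congr rfl (fun v _ => hpt v)]
    have hmul : (s'.map (fun v => C (-1:ℝ) * (X - C (-v)))).prod
        = (s'.map (fun _ => C (-1:ℝ))).prod * (s'.map (fun v => X - C (-v))).prod := by
      rw [← Multiset.prod_map_mul]
    rw [hmul]
    have hconst : (s'.map (fun _ => C (-1:ℝ))).prod = C ((-1:ℝ)^K) := by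
      rw [Multiset.map_const', Multiset.prod_replicate, ← C_pow, hK]
    rw [hconst, Multiset.map_map]
    rw [show ((fun x : ℝ => X - C x) ∘ fun x : ℝ => -x) = (fun v : ℝ => X - C (-v)) from rfl]
    rw [← mul_assoc, ← C_mul]
  have hqnne : qn ≠ 0 := by
    rw [hqnfact]
    exact mul_ne_zero (by simp [hane]) (prod_XsubC_ne_zero _)
  have hlow2 : Multiset.card sneg ≤ W qn := by
    have h1 : qn = (C (a * (-1)^K) * ((spos.map (fun x => -x)).map (fun x => X - C x)).prod)
        * ((sneg.map (fun x => -x)).map (fun x => X - C x)).prod := by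
      rw [hqnfact, hs', Multiset.map_add, Multiset.map_add, Multiset.prod_add]; ring
    have h2 : Multiset.card sneg = Multiset.card (sneg.map (fun x => -x)) := by
      rw [Multiset.card_map]
    rw [h1, h2]
    apply Wprod _ (mul_ne_zero (by simp [hane]) (prod_XsubC_ne_zero _))
    intro x hx
    obtain ⟨y, hy, rfl⟩ := Multiset.mem_map.mp hx
    have := (Multiset.mem_filter.mp hy).2
    linarith
  -- upper bound via lemC
  obtain ⟨e, E, hE⟩ : ∃ e E, El q = e :: E := by
    rcases h : El q with _ | ⟨e, E⟩
    · exact absurd h (El_ne_nil hqne)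
    · exact ⟨e, E, rfl⟩
  have hbb' : ∀ i j, qn.coeff i * qn.coeff j = (-1:ℝ)^(i+j) * (q.coeff i * q.coeff j) := by
    intro i j
    rw [hqn, coeff_comp_neg_X, coeff_comp_neg_X, pow_add]
    ring
  have hup : W q + W qn + e ≤ K := by
    have hch : List.Chain' (· < ·) (e :: E) := hE ▸ El_chain' q
    have hnz : ∀ x ∈ e :: E, q.coeff x ≠ 0 := fun x hx => (mem_El.mp (hE ▸ hx : x ∈ El q)).2
    have hbd : ∀ x ∈ e :: E, x ≤ K := fun x hx => by
      have := (mem_El.mp (hE ▸ hx : x ∈ El q)).1; omega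
    have h1 := lemC q.coeff qn.coeff hbb' E e K hch hnz hbd
    have hWq : W q = signChanges ((e :: E).map q.coeff) := by unfold W; rw [hE]
    have hWqn : W qn = signChanges ((e :: E).map qn.coeff) := by
      unfold W
      rw [hqn, El_comp_neg_X, hE]
    omega
  have hKsum : K = Multiset.card sneg + Multiset.card spos := by
    rw [hK, hs']; simp
  have hW : W q = Multiset.card spos := by omega
  rw [RHS_eq_W, hWpq, hW]
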